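/- Every word in Dₙ of the form aᵏ·w (i.e., beginning with k consecutive a's followed by a word not starting with a) satisfies k ≤ n. In particular, the word aⁿ⁺¹bⁿ⁺¹ is not in Dₙ. -/

import Mathlib

/-- The star-free languages `Dₙ` over `Σ = {a, b}` (here `a` = `true`, `b` = `false`):
`D₀ = {ε}` and `Dₙ₊₁ = (a · Dₙ · b)*`. -/
def D : ℕ → Language Bool
  | 0 => 1
  | n + 1 => KStar.kstar (({[true]} : Language Bool) * D n * {[false]})

/-- Length of the initial run of `true`s. -/
def leadA (l : List Bool) : ℕ := (l.takeWhile id).length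

lemma leadA_append_false (v t : List Bool) :
    leadA (v ++ false :: t) = leadA v := by
  induction v with
  | nil => simp [leadA]
  | cons b v ih =>
    cases b <;> simp [leadA, List.takeWhile] at * <;> simpa using ih

lemma le_leadA_replicate_append (k : ℕ) (w : List Bool) :
    k ≤ leadA (List.replicate k true ++ w) := by
  induction k with
  | zero => exact Nat.zero_le _
  | succ k ih =>
    simp only [List.replicate_succ, List.cons_append, leadA, List.takeWhile] at *
    simpa using ih

lemma D_leadA (n : ℕ) : ∀ u ∈ D n, leadA u ≤ n := by
  induction n with
  | zero =>
    intro u hu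
    have : u = [] := by simpa [D, Language.mem_one] using hu
    simp [this, leadA]
  | succ n ih =>
    intro u hu
    rw [D, Language.mem_kstar] at hu
    obtain ⟨S, rfl, hS⟩ := hu
    induction S with
    | nil => simp [leadA]
    | cons s S ihS =>
      obtain ⟨x, hx, y, hy, rfl⟩ := hS s (by simp)
      obtain ⟨a, ha, b, hb, rfl⟩ := hx
      change a = [true] at ha; change y = [false] at hy
      subst ha; subst hy
      have hb' : leadA b ≤ n := ih b hb
      simp only [List.flatten_cons, List.append_assoc, List.singleton_append,
        List.cons_append, List.nil_append]
      have h1 : leadA (true :: (b ++ false :: List.flatten S))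
          = leadA (b ++ false :: List.flatten S) + 1 := by
        simp [leadA, List.takeWhile]
      have h2 := leadA_append_false b (List.flatten S)
      omega

/-- Every word in `Dₙ` beginning with `k` consecutive `a`'s followed by a word not
starting with `a` satisfies `k ≤ n`; in particular `aⁿ⁺¹bⁿ⁺¹ ∉ Dₙ`. -/
theorem D_initial_run_le (n : ℕ) :
    (∀ (k : ℕ) (w : List Bool),
        List.replicate k true ++ w ∈ D n → w.head? ≠ some true → k ≤ n) ∧
      List.replicate (n + 1) true ++ List.replicate (n + 1) false ∉ D n := by
  constructor
  · intro k w hmem _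
    exact le_trans (le_leadA_replicate_append k w) (D_leadA n _ hmem)
  · intro hmem
    have h := le_trans (le_leadA_replicate_append (n + 1) (List.replicate (n + 1) false))
      (D_leadA n _ hmem)
    omega
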